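/- In the quotient ring R = \mathbb{Q}[y1, y2, Y1, Y2]/(y1 Y1 - 1, y2 Y2 - 1, y1 - Y1 Y2, y2 - Y1 Y2), the element w = y1 + y2 + Y1 Y2 satisfies (w - 3)(w^2 + 3w + 9) = 0, and this is the minimal polynomial relation: the kernel of the map \mathbb{Q}[z] \to R sending z to w is the ideal generated by (z-3)(z^2+3z+9) = z^3 - 27. -/

import Mathlib

open MvPolynomial

/-- The ideal of relations for the Jacobian ring of the Hori–Vafa potential of `ℙ²`:
variables `X 0 = y₁`, `X 1 = y₂`, `X 2 = Y₁`, `X 3 = Y₂`, with relations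
`y₁Y₁ = 1`, `y₂Y₂ = 1`, `y₁ = Y₁Y₂`, `y₂ = Y₁Y₂`. -/
noncomputable def jacIdealP2 : Ideal (MvPolynomial (Fin 4) ℚ) :=
  Ideal.span {X 0 * X 2 - 1, X 1 * X 3 - 1, X 0 - X 2 * X 3, X 1 - X 2 * X 3}

/-- The class of `w = y₁ + y₂ + Y₁Y₂` in the Jacobian ring. -/
noncomputable def wP2 : MvPolynomial (Fin 4) ℚ ⧸ jacIdealP2 :=
  Ideal.Quotient.mk jacIdealP2 (X 0 + X 1 + X 2 * X 3)

lemma jac_part1 : (wP2 - 3) * (wP2 ^ 2 + 3 * wP2 + 9) = 0 := by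
  have mem : ∀ p ∈ ({X 0 * X 2 - 1, X 1 * X 3 - 1, X 0 - X 2 * X 3, X 1 - X 2 * X 3} :
      Set (MvPolynomial (Fin 4) ℚ)), Ideal.Quotient.mk jacIdealP2 p = 0 := fun p hp =>
    Ideal.Quotient.eq_zero_iff_mem.2 (Ideal.subset_span hp)
  set q := Ideal.Quotient.mk jacIdealP2 with hq
  have h1 : q (X 0) * q (X 2) - 1 = 0 := by
    have := mem _ (by left; rfl); rw [map_sub, map_mul, map_one] at this; exact this
  have h2 : q (X 1) * q (X 3) - 1 = 0 := by
    have := mem _ (by right; left; rfl); rw [map_sub, map_mul, map_one] at this; exact this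
  have h3 : q (X 0) - q (X 2) * q (X 3) = 0 := by
    have := mem _ (by right; right; left; rfl); rw [map_sub, map_mul] at this; exact this
  have h4 : q (X 1) - q (X 2) * q (X 3) = 0 := by
    have := mem _ (by right; right; right; rfl); rw [map_sub, map_mul] at this; exact this
  have hw : wP2 = q (X 0) + q (X 1) + q (X 2) * q (X 3) := by
    simp [wP2, hq, map_add, map_mul]
  have ha : q (X 0) = q (X 2) * q (X 3) := by linear_combination h3
  have hb : q (X 1) = q (X 2) * q (X 3) := by linear_combination h4
  have hc : q (X 2) ^ 2 * q (X 3) = 1 := by linear_combination h1 - q (X 2) * h3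
  have hd : q (X 2) * q (X 3) ^ 2 = 1 := by linear_combination h2 - q (X 3) * h4
  have hcd : (q (X 2) * q (X 3)) ^ 3 = 1 := by
    linear_combination (q (X 2) * q (X 3) ^ 2) * hc + hd
  rw [hw, ha, hb]
  linear_combination 27 * hcd

lemma comp_dvd (p : Polynomial ℚ) (h : (Polynomial.X ^ 3 - 1 : Polynomial ℚ) ∣
    p.comp (Polynomial.C 3 * Polynomial.X)) :
    (Polynomial.X ^ 3 - Polynomial.C 27 : Polynomial ℚ) ∣ p := by
  obtain ⟨q, hq⟩ := h
  refine ⟨Polynomial.C (1/27) * q.comp (Polynomial.C (1/3) * Polynomial.X), ?_⟩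
  have h2 := congrArg (fun r : Polynomial ℚ =>
    r.comp (Polynomial.C (1/3) * Polynomial.X)) hq
  simp only [Polynomial.comp_assoc, Polynomial.mul_comp, Polynomial.sub_comp,
    Polynomial.pow_comp, Polynomial.X_comp, Polynomial.C_comp, Polynomial.one_comp] at h2
  have h3 : (Polynomial.C 3 * (Polynomial.C (1/3 : ℚ) * Polynomial.X)) = Polynomial.X := by
    rw [← mul_assoc, ← Polynomial.C_mul]; norm_num
  rw [h3, Polynomial.comp_X] at h2
  rw [h2]
  have h4 : (Polynomial.C (1/3 : ℚ) * Polynomial.X) ^ 3 - 1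
      = Polynomial.C (1/27) * (Polynomial.X ^ 3 - Polynomial.C 27) := by
    rw [mul_pow, ← Polynomial.C_pow, mul_sub, ← Polynomial.C_mul]
    norm_num
  rw [h4]; ring

noncomputable def gP2 : Polynomial ℚ := Polynomial.X ^ 3 - 1

noncomputable def rP2 : AdjoinRoot gP2 := AdjoinRoot.root gP2

lemma rP2_cube : rP2 ^ 3 = 1 := by
  have h0 : (Polynomial.aeval rP2) ((Polynomial.X : Polynomial ℚ) ^ 3 - 1) = 0 := by
    rw [rP2, AdjoinRoot.aeval_eq]; exact AdjoinRoot.mk_self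
  simp only [map_sub, map_pow, Polynomial.aeval_X, map_one] at h0
  linear_combination h0

noncomputable def φP2 : MvPolynomial (Fin 4) ℚ →ₐ[ℚ] AdjoinRoot gP2 :=
  aeval ![rP2, rP2, rP2 ^ 2, rP2 ^ 2]

lemma φP2_ker : ∀ a ∈ jacIdealP2, φP2 a = 0 := by
  have : jacIdealP2 ≤ RingHom.ker φP2.toRingHom := by
    rw [jacIdealP2, Ideal.span_le]
    rintro p (rfl | rfl | rfl | rfl) <;>
      · rw [SetLike.mem_coe, RingHom.mem_ker]
        show φP2 _ = 0
        simp only [φP2, map_sub, map_mul, map_one, aeval_X]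
        simp only [Matrix.cons_val_zero, Matrix.cons_val_one, Matrix.head_cons,
          Matrix.cons_val_two, Matrix.cons_val_three, Matrix.tail_cons]
        first
          | linear_combination rP2_cube
          | linear_combination (-rP2) * rP2_cube
  intro a ha
  exact this ha

noncomputable def ΦP2 : MvPolynomial (Fin 4) ℚ ⧸ jacIdealP2 →ₐ[ℚ] AdjoinRoot gP2 :=
  Ideal.Quotient.liftₐ jacIdealP2 φP2 φP2_ker

lemma ΦP2_w : ΦP2 wP2 = 3 * rP2 := by
  have : ΦP2 wP2 = φP2 (X 0 + X 1 + X 2 * X 3) := by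
    rw [wP2, ΦP2, Ideal.Quotient.liftₐ_apply]
    rfl
  rw [this]
  simp only [φP2, map_add, map_mul, aeval_X]
  simp only [Matrix.cons_val_zero, Matrix.cons_val_one, Matrix.head_cons,
    Matrix.cons_val_two, Matrix.cons_val_three, Matrix.tail_cons]
  linear_combination rP2 * rP2_cube

/-- In the Jacobian ring `R = ℚ[y₁,y₂,Y₁,Y₂]/(y₁Y₁-1, y₂Y₂-1, y₁-Y₁Y₂, y₂-Y₁Y₂)`,
the element `w = y₁ + y₂ + Y₁Y₂` satisfies `(w-3)(w²+3w+9) = 0`, and the kernel of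
the evaluation `ℚ[z] → R`, `z ↦ w`, is generated by `(z-3)(z²+3z+9)`. -/
theorem minimal_relation_P2 :
    (wP2 - 3) * (wP2 ^ 2 + 3 * wP2 + 9) = 0 ∧
    RingHom.ker ((Polynomial.aeval wP2 :
        Polynomial ℚ →ₐ[ℚ] MvPolynomial (Fin 4) ℚ ⧸ jacIdealP2).toRingHom) =
      Ideal.span {(Polynomial.X - 3) * (Polynomial.X ^ 2 + 3 * Polynomial.X + 9)} := by
  refine ⟨jac_part1, ?_⟩
  have hf : ((Polynomial.X - 3) * (Polynomial.X ^ 2 + 3 * Polynomial.X + 9) : Polynomial ℚ)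
      = Polynomial.X ^ 3 - Polynomial.C 27 := by
    rw [show (Polynomial.C (27:ℚ) : Polynomial ℚ) = 27 from map_ofNat Polynomial.C 27]
    ring
  apply le_antisymm
  · intro p hp
    rw [RingHom.mem_ker] at hp
    rw [Ideal.mem_span_singleton, hf]
    simp only [AlgHom.toRingHom_eq_coe, RingHom.coe_coe] at hp
    have h5 : Polynomial.aeval rP2 (Polynomial.C (3:ℚ) * Polynomial.X)
        = (3 : AdjoinRoot gP2) * rP2 := by
      rw [map_mul, Polynomial.aeval_X, Polynomial.aeval_C, map_ofNat]
    have key : Polynomial.aeval rP2 (p.comp (Polynomial.C 3 * Polynomial.X)) = 0 := by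
      rw [Polynomial.aeval_comp, h5, ← ΦP2_w, Polynomial.aeval_algHom_apply, hp, map_zero]
    have hmk : AdjoinRoot.mk gP2 (p.comp (Polynomial.C 3 * Polynomial.X)) = 0 := by
      rw [← AdjoinRoot.aeval_eq]; exact key
    exact comp_dvd p (AdjoinRoot.mk_eq_zero.1 hmk)
  · rw [Ideal.span_le]
    rintro q rfl
    rw [SetLike.mem_coe, RingHom.mem_ker]
    simp only [map_mul, map_add, map_sub, map_pow, map_ofNat, Polynomial.aeval_X,
      AlgHom.toRingHom_eq_coe, RingHom.coe_coe]
    linear_combination jac_part1
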